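/- There exists a symmetric Hadamard matrix of order 92; that is, there exists a 92 × 92 matrix H with entries in {−1, +1} such that H·Hᵀ = 92·I and Hᵀ = H. -/

import Mathlib

open Matrix

set_option maxRecDepth 100000
set_option maxHeartbeats 1000000

namespace SymHad92

abbrev n := Fin 23

def aa : n → ℤ := ![1,-1,1,1,-1,1,-1,-1,-1,-1,-1,-1,-1,-1,-1,-1,-1,-1,1,-1,1,1,-1]
def bb : n → ℤ := ![1,1,1,1,-1,-1,1,1,-1,-1,1,-1,1,-1,1,1,1,-1,1,-1,-1,-1,-1]
def dd : n → ℤ := ![1,-1,1,1,-1,-1,-1,1,1,1,-1,-1,1,1,-1,-1,1,-1,-1,1,-1,-1,-1]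
def bt : n → ℤ := fun s => bb (-s)
def dt : n → ℤ := fun s => dd (-s)

def cc (v : n → ℤ) : Matrix n n ℤ := Matrix.of fun i j => v (i - j)
def kk (v : n → ℤ) : Matrix n n ℤ := Matrix.of fun i j => v (i + j)

def conv (v w : n → ℤ) : n → ℤ := fun s => ∑ t, v t * w (s - t)
def corr (v w : n → ℤ) : n → ℤ := fun s => ∑ t, v t * w (t - s)

lemma cc_mul_cc (v w : n → ℤ) : cc v * cc w = cc (conv v w) := by
  ext i j
  show ∑ k, v (i - k) * w (k - j) = conv v w (i - j)
  rw [conv]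
  refine (Fintype.sum_equiv (Equiv.subLeft i) _ _ ?_).symm
  intro t
  simp [Equiv.subLeft, sub_sub_cancel, sub_right_comm]

lemma cc_mul_kk (v w : n → ℤ) : cc v * kk w = kk (conv v w) := by
  ext i j
  show ∑ k, v (i - k) * w (k + j) = conv v w (i + j)
  rw [conv]
  refine (Fintype.sum_equiv (Equiv.subLeft i) _ _ ?_).symm
  intro t
  simp [Equiv.subLeft, sub_sub_cancel, sub_add_eq_add_sub]

lemma kk_mul_cc (v w : n → ℤ) : kk v * cc w = kk (corr v w) := by
  ext i j
  show ∑ k, v (i + k) * w (k - j) = corr v w (i + j)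
  rw [corr]
  refine (Fintype.sum_equiv (Equiv.subRight i) _ _ ?_).symm
  intro t
  show v t * w (t - (i + j)) = v (i + (t - i)) * w ((t - i) - j)
  have h1 : i + (t - i) = t := add_sub_cancel i t
  have h2 : (t - i) - j = t - (i + j) := sub_sub t i j
  rw [h1, h2]

lemma kk_mul_kk (v w : n → ℤ) : kk v * kk w = cc (corr v w) := by
  ext i j
  show ∑ k, v (i + k) * w (k + j) = corr v w (i - j)
  rw [corr]
  refine (Fintype.sum_equiv (Equiv.subRight i) _ _ ?_).symm
  intro t
  show v t * w (t - (i - j)) = v (i + (t - i)) * w ((t - i) + j)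
  have h1 : i + (t - i) = t := add_sub_cancel i t
  have h2 : (t - i) + j = t - (i - j) := sub_add t i j
  rw [h1, h2]

lemma cc_transpose (v : n → ℤ) : (cc v)ᵀ = cc (fun s => v (-s)) := by
  ext i j; show v (j - i) = v (-(i - j)); rw [neg_sub]

lemma kk_transpose (v : n → ℤ) : (kk v)ᵀ = kk v := by
  ext i j; show v (j + i) = v (i + j); rw [add_comm]

lemma cc_add (v w : n → ℤ) : cc v + cc w = cc (v + w) := rfl
lemma kk_add (v w : n → ℤ) : kk v + kk w = kk (v + w) := rfl
lemma cc_neg (v : n → ℤ) : -(cc v) = cc (-v) := rfl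
lemma kk_neg (v : n → ℤ) : -(kk v) = kk (-v) := rfl

lemma aT : (cc aa)ᵀ = cc aa := by
  rw [cc_transpose]
  exact congrArg cc (funext (by decide : ∀ s, aa (-s) = aa s))
lemma bT : (cc bb)ᵀ = cc bt := by rw [cc_transpose]; rfl
lemma btT : (cc bt)ᵀ = cc bb := by
  rw [cc_transpose]
  exact congrArg cc (funext fun s => by simp [bt])
lemma dT : (cc dd)ᵀ = cc dt := by rw [cc_transpose]; rfl
lemma dtT : (cc dt)ᵀ = cc dd := by
  rw [cc_transpose]
  exact congrArg cc (funext fun s => by simp [dt])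

-- The 4x4 block matrix
def Mb : Matrix ((n ⊕ n) ⊕ (n ⊕ n)) ((n ⊕ n) ⊕ (n ⊕ n)) ℤ :=
  fromBlocks
    (fromBlocks (-(kk dd)) (cc aa) (cc aa) (kk dd))
    (fromBlocks (cc bt) (-(kk bb)) (-(cc bt)) (-(kk bb)))
    (fromBlocks (cc bb) (-(cc bb)) (-(kk bb)) (-(kk bb)))
    (fromBlocks (cc aa) (-(cc dd)) (-(cc dt)) (-(cc aa)))

lemma Mb_transpose : Mbᵀ = Mb := by
  simp only [Mb, fromBlocks_transpose, transpose_neg, aT, bT, btT, dT, dtT, kk_transpose]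

lemma one_blk : (92:ℤ) • (1 : Matrix n n ℤ) = cc (fun s => if s = 0 then 92 else 0) := by
  ext i j
  simp [Matrix.one_apply, cc, sub_eq_zero, eq_comm]

-- general convolution lemmas
lemma conv_comm (v w : n → ℤ) : conv v w = conv w v := by
  funext s
  rw [conv, conv]
  refine Fintype.sum_equiv (Equiv.subLeft s) _ _ ?_
  intro t
  show v t * w (s - t) = w (s - t) * v (s - (s - t))
  rw [sub_sub_cancel]; ring

lemma negconv (v w : n → ℤ) : conv (fun x => w (-x)) v = corr v w := by
  funext s
  rw [conv, corr]
  refine Fintype.sum_equiv (Equiv.subLeft s) _ _ ?_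
  intro t
  show w (-t) * v (s - t) = v (s - t) * w (s - t - s)
  have h : s - t - s = -t := sub_sub_cancel_left s t
  rw [h]; ring

lemma corrneg (v w : n → ℤ) : corr v (fun x => w (-x)) = conv v w := by
  funext s
  rw [corr, conv]
  exact Finset.sum_congr rfl fun t _ => by rw [neg_sub]

lemma haA : (fun x => aa (-x)) = aa := funext (by decide : ∀ x, aa (-x) = aa x)

lemma corr_symmA (v : n → ℤ) : corr v aa = conv v aa := by
  rw [← corrneg v aa, haA]

-- orientation lemmas
lemma eA1 : corr dd aa = conv aa dd := (corr_symmA dd).trans (conv_comm dd aa)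
lemma eA2 : conv dd aa = conv aa dd := conv_comm dd aa
lemma eA3 : corr bb aa = conv aa bb := (corr_symmA bb).trans (conv_comm bb aa)
lemma eA4 : conv bb aa = conv aa bb := conv_comm bb aa
lemma eB1 : conv bt bb = corr bb bb := negconv bb bb
lemma eB2 : conv bt aa = conv aa bt := conv_comm bt aa
lemma eB3 : conv bt dd = corr dd bb := negconv dd bb
lemma eB4 : corr bb dt = conv bb dd := corrneg bb dd
lemma eB5 : corr dd bt = conv bb dd := (corrneg dd bb).trans (conv_comm dd bb)
lemma eB6 : conv dd bb = conv bb dd := conv_comm dd bb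
lemma eC1 : conv bb bt = corr bb bb := (conv_comm bb bt).trans (negconv bb bb)
lemma eC2 : conv dd dt = corr dd dd := (conv_comm dd dt).trans (negconv dd dd)
lemma eC3 : conv dt dd = corr dd dd := negconv dd dd
lemma eB7 : conv dt bb = corr bb dd := negconv bb dd
lemma eB8 : conv dt aa = conv aa dt := conv_comm dt aa

-- the single diagonal vector identity (post-normalization)
lemma vid : ∀ s : n, corr dd dd s + conv aa aa s + corr bb bb s + corr bb bb s
    = (if s = 0 then 92 else 0) := by decide

theorem Mb_sq : Mb * Mb = (92:ℤ) • 1 := by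
  have h1 : (1 : Matrix (n ⊕ n) (n ⊕ n) ℤ) = fromBlocks 1 0 0 1 := fromBlocks_one.symm
  have h2 : (1 : Matrix ((n ⊕ n) ⊕ (n ⊕ n)) ((n ⊕ n) ⊕ (n ⊕ n)) ℤ) = fromBlocks 1 0 0 1 :=
    fromBlocks_one.symm
  have h0 : (0 : Matrix (n ⊕ n) (n ⊕ n) ℤ) = fromBlocks 0 0 0 0 := fromBlocks_zero.symm
  rw [Mb, fromBlocks_multiply]
  simp only [fromBlocks_multiply, fromBlocks_add, neg_mul, mul_neg, neg_neg,
    cc_mul_cc, cc_mul_kk, kk_mul_cc, kk_mul_kk,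
    eA1, eA2, eA3, eA4, eB1, eB2, eB3, eB4, eB5, eB6, eB7, eB8, eC1, eC2, eC3]
  simp only [h2, h1, h0, fromBlocks_smul, smul_zero, fromBlocks_inj]
  refine ⟨⟨?_, ?_, ?_, ?_⟩, ⟨?_, ?_, ?_, ?_⟩, ⟨?_, ?_, ?_, ?_⟩, ⟨?_, ?_, ?_, ?_⟩⟩ <;>
  first
    | (rw [one_blk]; simp only [cc_add]
       exact congrArg cc (funext fun s => by
         simp only [Pi.add_apply]; linarith [vid s]))
    | abel

lemma entry_pm (p q : (n ⊕ n) ⊕ (n ⊕ n)) : Mb p q = 1 ∨ Mb p q = -1 := by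
  have ha : ∀ k : n, aa k = 1 ∨ aa k = -1 := by decide
  have hb : ∀ k : n, bb k = 1 ∨ bb k = -1 := by decide
  have hd : ∀ k : n, dd k = 1 ∨ dd k = -1 := by decide
  have hbt : ∀ k : n, bt k = 1 ∨ bt k = -1 := fun k => hb (-k)
  have hdt : ∀ k : n, dt k = 1 ∨ dt k = -1 := fun k => hd (-k)
  have hneg : ∀ x : ℤ, (x = 1 ∨ x = -1) → (-x = 1 ∨ -x = -1) := by
    rintro x (h | h) <;> simp [h]
  rcases p with (p | p) | (p | p) <;> rcases q with (q | q) | (q | q) <;>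
    simp only [Mb, fromBlocks_apply₁₁, fromBlocks_apply₁₂, fromBlocks_apply₂₁,
      fromBlocks_apply₂₂, Matrix.neg_apply, cc, kk, Matrix.of_apply] <;>
    first
      | exact ha _
      | exact hb _
      | exact hd _
      | exact hbt _
      | exact hdt _
      | exact hneg _ (ha _)
      | exact hneg _ (hb _)
      | exact hneg _ (hd _)

def E : ((n ⊕ n) ⊕ (n ⊕ n)) ≃ Fin 92 :=
  (Equiv.sumCongr
      (finSumFinEquiv : n ⊕ n ≃ Fin 46)
      (finSumFinEquiv : n ⊕ n ≃ Fin 46)).trans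
    (finSumFinEquiv : Fin 46 ⊕ Fin 46 ≃ Fin 92)

end SymHad92

/-- There exists a symmetric Hadamard matrix of order 92. -/
theorem exists_symmetric_hadamard_92 :
    ∃ H : Matrix (Fin 92) (Fin 92) ℤ,
      (∀ i j, H i j = 1 ∨ H i j = -1) ∧
      H * Hᵀ = (92 : ℤ) • (1 : Matrix (Fin 92) (Fin 92) ℤ) ∧
      Hᵀ = H := by
  refine ⟨SymHad92.Mb.submatrix SymHad92.E.symm SymHad92.E.symm,
    fun i j => SymHad92.entry_pm _ _, ?_, ?_⟩
  · rw [Matrix.transpose_submatrix, SymHad92.Mb_transpose,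
      Matrix.submatrix_mul_equiv SymHad92.Mb SymHad92.Mb _ SymHad92.E.symm _, SymHad92.Mb_sq]
    ext i j
    simp only [Matrix.submatrix_apply, Matrix.smul_apply, Matrix.one_apply,
      EmbeddingLike.apply_eq_iff_eq, smul_eq_mul]
  · rw [Matrix.transpose_submatrix, SymHad92.Mb_transpose]
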